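/- If T is separated, then the endomorphism algebra End(𝟙) of the unit object of T is a semisimple (commutative, finite-dimensional) k-algebra; equivalently, it is reduced, hence isomorphic to a finite product of copies of k. -/

import Mathlib

open CategoryTheory CategoryTheory.Limits CategoryTheory.MonoidalCategory

universe v u w

/-- A morphism `f : X ⟶ Y` is *split* if it is a direct sum of a zero morphism and an
isomorphism; equivalently, if there exists `g : Y ⟶ X` with `f ≫ g ≫ f = f`. -/
def IsSplit {C : Type u} [Category.{v} C] {X Y : C} (f : X ⟶ Y) : Prop :=
  ∃ g : Y ⟶ X, f ≫ g ≫ f = f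

/-- An object `R` is a *splitting object* if for every morphism `f : X ⟶ Y` both
`id_R ⊗ f` and `f ⊗ id_R` are split. -/
def IsSplittingObject {C : Type u} [Category.{v} C] [MonoidalCategory C] (R : C) : Prop :=
  ∀ ⦃X Y : C⦄ (f : X ⟶ Y), IsSplit (R ◁ f) ∧ IsSplit (f ▷ R)

/-- An object `R` is *indecomposable* if it is nonzero and its only idempotent endomorphisms
are `0` and the identity. -/
def IsIndecomposable {C : Type u} [Category.{v} C] [Preadditive C] (R : C) : Prop :=
  ¬ IsZero R ∧ ∀ e : R ⟶ R, e ≫ e = e → e = 0 ∨ e = 𝟙 R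

/-- `R` is a direct summand of `S`. -/
def IsDirectSummand {C : Type u} [Category.{v} C] (R S : C) : Prop :=
  ∃ (i : R ⟶ S) (r : S ⟶ R), i ≫ r = 𝟙 R

/-- Auxiliary: reindexing a finite product of copies of the base field. -/
def myPiReindexAlgEquiv {k : Type w} [CommSemiring k] {ι κ : Type*} (σ : ι ≃ κ) :
    (ι → k) ≃ₐ[k] (κ → k) where
  toFun f := f ∘ σ.symm
  invFun f := f ∘ σ
  left_inv f := by ext i; simp
  right_inv f := by ext i; simp
  map_mul' _ _ := rfl
  map_add' _ _ := rfl
  commutes' _ := rfl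

/-- Auxiliary: a central split element dominates its powers. -/
lemma my_central_split_pow {M : Type*} [Monoid M] {u g : M} (h1 : u * g * u = u)
    (hc : ∀ h : M, u * h = h * u) : ∀ m : ℕ, u = u ^ (m + 1) * g ^ m := by
  have h2 : u = u * u * g := by
    conv_lhs => rw [← h1]
    rw [mul_assoc, ← hc g, ← mul_assoc]
  intro m
  induction m with
  | zero => simp [← h2]
  | succ m ih =>
    calc u = u ^ (m + 1) * g ^ m := ih
      _ = (u ^ m * u) * g ^ m := by rw [pow_succ]
      _ = (u ^ m * (u * u * g)) * g ^ m := by rw [← h2]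
      _ = u ^ (m + 1 + 1) * g ^ (m + 1) := by
            rw [pow_succ u (m + 1), pow_succ u m, pow_succ' g m]
            simp only [mul_assoc]

section

variable {k : Type w} [Field k] [IsAlgClosed k]
variable {C : Type u} [Category.{v} C] [Preadditive C] [Linear k C]
  [MonoidalCategory C] [MonoidalPreadditive C] [MonoidalLinear k C]
  [RigidCategory C] [IsIdempotentComplete C]
  [HasFiniteBiproducts C] [HasBinaryBiproducts C]
  [∀ X Y : C, FiniteDimensional k (X ⟶ Y)]

omit [Preadditive C] in
/-- Endomorphisms of the unit object commute. -/
lemma my_comp_comm (f g : 𝟙_ C ⟶ 𝟙_ C) : f ≫ g = g ≫ f := by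
  have e1 : 𝟙_ C ◁ g = (λ_ (𝟙_ C)).hom ≫ g ≫ (λ_ (𝟙_ C)).inv := by
    rw [← cancel_mono (λ_ (𝟙_ C)).hom]
    simp [MonoidalCategory.leftUnitor_naturality]
  have e2 : f ▷ 𝟙_ C = (λ_ (𝟙_ C)).hom ≫ f ≫ (λ_ (𝟙_ C)).inv := by
    rw [← cancel_mono (ρ_ (𝟙_ C)).hom]
    simp [MonoidalCategory.rightUnitor_naturality, unitors_equal, unitors_inv_equal]
  have ex := MonoidalCategory.whisker_exchange f g
  rw [e1, e2] at ex
  simp only [Category.assoc, Iso.inv_hom_id_assoc] at ex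
  rw [← cancel_mono (λ_ (𝟙_ C)).inv, ← cancel_epi (λ_ (𝟙_ C)).hom]
  simpa using ex.symm

omit [Preadditive C] in
/-- Whiskering an endomorphism of the unit is central. -/
lemma my_central (Q : C) (f : 𝟙_ C ⟶ 𝟙_ C) (h : Q ⊗ 𝟙_ C ⟶ Q ⊗ 𝟙_ C) :
    Q ◁ f ≫ h = h ≫ Q ◁ f := by
  have hh : ((ρ_ Q).inv ≫ h ≫ (ρ_ Q).hom) ▷ 𝟙_ C = h := by
    rw [← cancel_mono (ρ_ Q).hom, MonoidalCategory.rightUnitor_naturality]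
    simp
  rw [← hh]
  exact MonoidalCategory.whisker_exchange _ f

lemma my_whisker_pow (Q : C) (x : End (𝟙_ C)) (u : End (Q ⊗ 𝟙_ C))
    (hu : u = Q ◁ (x : 𝟙_ C ⟶ 𝟙_ C)) (n : ℕ) :
    (Q ◁ ((x ^ n : End (𝟙_ C)) : 𝟙_ C ⟶ 𝟙_ C) : Q ⊗ 𝟙_ C ⟶ Q ⊗ 𝟙_ C)
      = (u ^ n : End (Q ⊗ 𝟙_ C)) := by
  induction n with
  | zero =>
    rw [pow_zero, pow_zero, End.one_def, End.one_def, MonoidalCategory.whiskerLeft_id]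
  | succ n ih =>
    rw [pow_succ, End.mul_def, MonoidalCategory.whiskerLeft_comp, ih, pow_succ, End.mul_def, hu]

lemma my_end_reduced
    (hsep : ∀ ⦃X Y : C⦄ (f : X ⟶ Y), f ≠ 0 → ∃ Q : C, IsSplittingObject Q ∧ Q ◁ f ≠ 0) :
    IsReduced (End (𝟙_ C)) := by
  refine ⟨fun x hx => ?_⟩
  by_contra hx0
  obtain ⟨n, hn⟩ := hx
  obtain ⟨Q, hQ, hne⟩ := hsep (x : 𝟙_ C ⟶ 𝟙_ C) hx0
  obtain ⟨g, hg⟩ := (hQ (x : 𝟙_ C ⟶ 𝟙_ C)).1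
  let u : End (Q ⊗ 𝟙_ C) := Q ◁ (x : 𝟙_ C ⟶ 𝟙_ C)
  let g' : End (Q ⊗ 𝟙_ C) := g
  have hu : u = Q ◁ (x : 𝟙_ C ⟶ 𝟙_ C) := rfl
  have hc : ∀ h : End (Q ⊗ 𝟙_ C), u * h = h * u :=
    fun h => (my_central Q x h).symm
  have h1 : u * g' * u = u := hg
  cases n with
  | zero =>
    rw [pow_zero] at hn
    exact hx0 (by rw [← mul_one x, hn, mul_zero])
  | succ m =>
    have hk := my_central_split_pow h1 hc m
    have hz : (u ^ (m + 1) : End (Q ⊗ 𝟙_ C)) = 0 := by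
      rw [← my_whisker_pow Q x u hu (m + 1), hn]
      simp
    apply hne
    show u = 0
    rw [hk, hz, zero_mul]

/-- If `T` is separated, then `End(𝟙)` is a semisimple (commutative, finite-dimensional)
`k`-algebra; equivalently, it is reduced, hence isomorphic to a finite product of copies
of `k`. -/
theorem end_unit_semisimple_of_separated
    (hsep : ∀ ⦃X Y : C⦄ (f : X ⟶ Y), f ≠ 0 → ∃ Q : C, IsSplittingObject Q ∧ Q ◁ f ≠ 0) :
    IsSemisimpleRing (End (𝟙_ C)) ∧ IsReduced (End (𝟙_ C)) ∧
      ∃ m : ℕ, Nonempty (End (𝟙_ C) ≃ₐ[k] (Fin m → k)) := by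
  letI : CommRing (End (𝟙_ C)) :=
    { (inferInstance : Ring (End (𝟙_ C))) with
      mul_comm := fun f g => my_comp_comm g f }
  have hred : IsReduced (End (𝟙_ C)) := my_end_reduced hsep
  haveI : Module.Finite k (End (𝟙_ C)) :=
    inferInstanceAs (Module.Finite k (𝟙_ C ⟶ 𝟙_ C))
  haveI : IsArtinianRing (End (𝟙_ C)) := IsArtinianRing.of_finite k _
  haveI := hred
  refine ⟨IsArtinianRing.isSemisimpleRing_of_isReduced (End (𝟙_ C)), hred, ?_⟩
  haveI : Finite {I : Ideal (End (𝟙_ C)) | I.IsMaximal} :=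
    (IsArtinianRing.setOfPred_isMaximal_finite _).to_subtype
  haveI : Fintype {I : Ideal (End (𝟙_ C)) | I.IsMaximal} := Fintype.ofFinite _
  set ι := {I : Ideal (End (𝟙_ C)) | I.IsMaximal} with hι
  -- the product-of-quotients algebra homomorphism
  let Φ : End (𝟙_ C) →ₐ[k] ∀ I : ι, End (𝟙_ C) ⧸ I.1 :=
    Pi.algHom k _ (fun I : ι => Ideal.Quotient.mkₐ k I.1)
  have hinj : Function.Injective Φ := by
    rw [injective_iff_map_eq_zero]
    intro a ha
    have hmem : ∀ J : Ideal (End (𝟙_ C)), J.IsPrime → a ∈ J := by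
      intro J hJ
      have hmax : J.IsMaximal := (IsArtinianRing.isPrime_iff_isMaximal J).mp hJ
      have := congrFun ha ⟨J, hmax⟩
      simpa [Φ, Ideal.Quotient.eq_zero_iff_mem] using this
    exact (nilpotent_iff_mem_prime.mpr hmem).eq_zero
  have hcop : Pairwise (Function.onFun IsCoprime fun I : ι => I.1) := fun I J h =>
    Ideal.isCoprime_iff_sup_eq.mpr <| I.2.coprime_of_ne J.2 <| by
      exact fun hIJ => h (Subtype.ext hIJ)
  have hsurj : Function.Surjective Φ := by
    intro y
    obtain ⟨r, hr⟩ := Ideal.pi_quotient_surjective hcop y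
    refine ⟨r, funext fun I => ?_⟩
    simp only [Φ, Pi.algHom_apply, Ideal.Quotient.mkₐ_eq_mk]
    rw [hr I]
  -- each quotient field is just `k`
  have ψ : ∀ I : ι, (End (𝟙_ C) ⧸ I.1) ≃ₐ[k] k := by
    intro I
    haveI : I.1.IsMaximal := I.2
    letI : Field (End (𝟙_ C) ⧸ I.1) := Ideal.Quotient.field I.1
    haveI : Module.Finite k (End (𝟙_ C) ⧸ I.1) :=
      Module.Finite.of_surjective (Ideal.Quotient.mkₐ k I.1).toLinearMap
        Ideal.Quotient.mk_surjective
    haveI : Algebra.IsIntegral k (End (𝟙_ C) ⧸ I.1) := Algebra.IsIntegral.of_finite k _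
    have hbij : Function.Bijective (algebraMap k (End (𝟙_ C) ⧸ I.1)) :=
      ⟨(algebraMap k (End (𝟙_ C) ⧸ I.1)).injective,
        IsAlgClosed.algebraMap_bijective_of_isIntegral.2⟩
    exact (AlgEquiv.ofBijective (Algebra.ofId k _) hbij).symm
  refine ⟨Fintype.card ι, ⟨((AlgEquiv.ofBijective Φ ⟨hinj, hsurj⟩).trans
    (AlgEquiv.piCongrRight ψ)).trans (myPiReindexAlgEquiv (Fintype.equivFin ι))⟩⟩

end
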